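/- Let m ≡ 1 mod 4 and n ≥ 1. Then there exists a free continuous action of the group (ℤ/2ℤ)^n on the product (ℝP^m)^n. (It is induced coordinatewise by the free action of ℤ/4ℤ on S^m given by multiplication by i in complex coordinates, which descends to a free ℤ/2ℤ-action on ℝP^m.) -/

import Mathlib

noncomputable section

/-- The unit sphere `S^m` in `ℝ^{m+1}`. -/
abbrev Sph (m : ℕ) : Type := Metric.sphere (0 : EuclideanSpace ℝ (Fin (m + 1))) 1

/-- The antipodal relation on the sphere `S^m`. -/
def antipodal (m : ℕ) (x y : Sph m) : Prop :=
  (y : EuclideanSpace ℝ (Fin (m + 1))) = (x : EuclideanSpace ℝ (Fin (m + 1))) ∨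
    (y : EuclideanSpace ℝ (Fin (m + 1))) = -(x : EuclideanSpace ℝ (Fin (m + 1)))

/-- Real projective `m`-space: the quotient of `S^m` by the antipodal map,
with the quotient topology. -/
abbrev RP (m : ℕ) : Type := Quot (antipodal m)

namespace Aux

variable {m : ℕ}

/-- index swap 2k ↔ 2k+1 -/
def eIdx (hm : m % 2 = 1) (j : Fin (m + 1)) : Fin (m + 1) :=
  if h : j.val % 2 = 0 then ⟨j.val + 1, by have := j.isLt; omega⟩
  else ⟨j.val - 1, by have := j.isLt; omega⟩

lemma eIdx_invol (hm : m % 2 = 1) (j : Fin (m + 1)) : eIdx hm (eIdx hm j) = j := by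
  apply Fin.ext
  unfold eIdx
  by_cases h : j.val % 2 = 0 <;> simp only [h, dite_true, dite_false] <;> split <;>
    simp_all <;> omega

def sgn (j : Fin (m + 1)) : ℝ := if j.val % 2 = 0 then -1 else 1

lemma sgn_mul_sgn_eIdx (hm : m % 2 = 1) (j : Fin (m + 1)) :
    sgn j * sgn (eIdx hm j) = -1 := by
  unfold sgn eIdx
  by_cases h : j.val % 2 = 0 <;> simp [h] <;> omega

lemma sgn_sq (j : Fin (m + 1)) : sgn j * sgn j = 1 := by
  unfold sgn; split <;> norm_num

def J (hm : m % 2 = 1) (x : EuclideanSpace ℝ (Fin (m + 1))) :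
    EuclideanSpace ℝ (Fin (m + 1)) :=
  WithLp.toLp 2 (fun j => sgn j * x (eIdx hm j))

lemma J_J (hm : m % 2 = 1) (x : EuclideanSpace ℝ (Fin (m + 1))) :
    J hm (J hm x) = -x := by
  ext j
  show sgn j * (sgn (eIdx hm j) * x (eIdx hm (eIdx hm j))) = -x j
  rw [eIdx_invol, ← mul_assoc, sgn_mul_sgn_eIdx, neg_one_mul]

lemma J_neg (hm : m % 2 = 1) (x : EuclideanSpace ℝ (Fin (m + 1))) :
    J hm (-x) = -J hm x := by
  ext j
  show sgn j * (-x) (eIdx hm j) = -(sgn j * x (eIdx hm j))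
  simp [mul_neg]

lemma J_cont (hm : m % 2 = 1) : Continuous (J hm) := by
  have : Continuous fun x : EuclideanSpace ℝ (Fin (m + 1)) => (fun j => sgn j * x (eIdx hm j) : Fin (m+1) → ℝ) := by
    exact continuous_pi fun j => continuous_const.mul ((continuous_apply (eIdx hm j)).comp (PiLp.continuous_ofLp 2 _))
  exact (PiLp.continuous_toLp 2 (fun _ : Fin (m+1) => ℝ)).comp this

lemma J_norm (hm : m % 2 = 1) (x : EuclideanSpace ℝ (Fin (m + 1))) :
    ‖J hm x‖ = ‖x‖ := by
  rw [EuclideanSpace.norm_eq, EuclideanSpace.norm_eq]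
  congr 1
  have hinv : Function.Involutive (eIdx hm) := eIdx_invol hm
  calc ∑ j, ‖J hm x j‖ ^ 2 = ∑ j, ‖x (eIdx hm j)‖ ^ 2 := by
        refine Finset.sum_congr rfl fun j _ => ?_
        show ‖sgn j * x (eIdx hm j)‖ ^ 2 = _
        rw [norm_mul]
        have : ‖sgn j‖ = 1 := by unfold sgn; split <;> simp
        rw [this, one_mul]
    _ = ∑ j, ‖x j‖ ^ 2 := Fintype.sum_equiv hinv.toPerm _ _ fun j => rfl

lemma J_ne (hm : m % 2 = 1) (x : EuclideanSpace ℝ (Fin (m + 1))) (hx : ‖x‖ = 1) :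
    J hm x ≠ x ∧ J hm x ≠ -x := by
  have hx0 : x ≠ 0 := by intro h; rw [h, norm_zero] at hx; norm_num at hx
  constructor
  · intro h
    have h2 := J_J hm x
    rw [h, h] at h2
    exact hx0 ((@self_eq_neg _ _ (IsAddTorsionFree.of_isTorsionFree ℝ _) _).mp h2)
  · intro h
    have h2 := J_J hm x
    rw [h, J_neg, h, neg_neg] at h2
    exact hx0 ((@self_eq_neg _ _ (IsAddTorsionFree.of_isTorsionFree ℝ _) _).mp h2)

/-- the induced sphere map -/
def JS (hm : m % 2 = 1) (x : Sph m) : Sph m :=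
  ⟨J hm x, by
    rw [mem_sphere_zero_iff_norm, J_norm]
    exact mem_sphere_zero_iff_norm.mp x.2⟩

lemma antipodal_equiv : Equivalence (antipodal m) := by
  constructor
  · intro x; left; rfl
  · rintro x y (h | h)
    · left; rw [h]
    · right; rw [h, neg_neg]
  · rintro x y z (h1 | h1) (h2 | h2) <;> [left; right; right; left] <;>
      simp [h1, h2, neg_neg] at *

/-- the involution on projective space -/
def sigma (hm : m % 2 = 1) : RP m → RP m :=
  Quot.map (JS hm) (by
    rintro x y (h | h)
    · left
      show J hm (y : EuclideanSpace ℝ (Fin (m+1))) = J hm x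
      rw [h]
    · right
      show J hm (y : EuclideanSpace ℝ (Fin (m+1))) = -(J hm x)
      rw [h, J_neg])

lemma sigma_cont (hm : m % 2 = 1) : Continuous (sigma hm) := by
  apply continuous_quot_lift
  exact continuous_quot_mk.comp
    (Continuous.subtype_mk ((J_cont hm).comp continuous_subtype_val) _)

lemma sigma_sigma (hm : m % 2 = 1) (p : RP m) : sigma hm (sigma hm p) = p := by
  induction p using Quot.ind with
  | _ x =>
    show Quot.mk _ (JS hm (JS hm x)) = Quot.mk _ x
    apply Quot.sound
    right
    show (x : EuclideanSpace ℝ (Fin (m+1))) = -(J hm (J hm x))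
    rw [J_J, neg_neg]

lemma sigma_ne (hm : m % 2 = 1) (p : RP m) : sigma hm p ≠ p := by
  induction p using Quot.ind with
  | _ x =>
    intro h
    have h' : antipodal m (JS hm x) x := (antipodal_equiv.eqvGen_iff).mp (Quot.eq.mp h)
    have hx : ‖(x : EuclideanSpace ℝ (Fin (m+1)))‖ = 1 := mem_sphere_zero_iff_norm.mp x.2
    obtain ⟨h1, h2⟩ := J_ne hm x hx
    rcases h' with h | h
    · exact h1 h.symm
    · have h' : -(J hm (x : EuclideanSpace ℝ (Fin (m+1)))) = ↑x := h.symm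
      exact h2 (neg_eq_iff_eq_neg.mp h')

end Aux

theorem stmt9 (m n : ℕ) (hm : m % 4 = 1) (hn : 1 ≤ n) :
    ∃ ρ : (Fin n → ZMod 2) → (Fin n → RP m) → (Fin n → RP m),
      (∀ x, ρ 0 x = x) ∧
      (∀ g h x, ρ (g + h) x = ρ g (ρ h x)) ∧
      (∀ g, Continuous (ρ g)) ∧
      (∀ g x, ρ g x = x → g = 0) := by
  have hm2 : m % 2 = 1 := by omega
  have hz : ∀ a : ZMod 2, a = 0 ∨ a = 1 := by decide
  refine ⟨fun g x i => if g i = 0 then x i else Aux.sigma hm2 (x i), ?_, ?_, ?_, ?_⟩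
  · intro x; funext i; simp
  · intro g h x
    funext i
    simp only
    rcases hz (g i) with hg | hg <;> rcases hz (h i) with hh | hh <;>
      simp [hg, hh, Aux.sigma_sigma, (by decide : (1 : ZMod 2) + 1 = 0)]
  · intro g
    apply continuous_pi
    intro i
    by_cases h : g i = 0
    · simpa [h] using continuous_apply i
    · simpa [h] using (Aux.sigma_cont hm2).comp' (continuous_apply i)
  · intro g x hgx
    funext i
    rcases hz (g i) with hg | hg
    · simp [hg]
    · exfalso
      have := congrFun hgx i
      simp only [hg] at this
      simp at this
      exact Aux.sigma_ne hm2 (x i) this
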